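/- Let R be a ring, M an R-module, (W̃, ≤) a finite partially ordered set, and F a map from lower sets of W̃ to R-submodules of M. Then F is a morphism of complete lattices (i.e. F(⋂_i W_i) = ⋂_i F(W_i) and F(⋃_i W_i) = Σ_i F(W_i) for every family (W_i) of lower sets) if and only if the following hold: F is inclusion-preserving, F(∅) = 0, F(W̃) = M, and for every pair of lower sets W₁, W₂ ⊆ W̃ the sequence of R-modules 0 → F(W₁ ∩ W₂) → F(W₁) ⊕ F(W₂) → F(W₁ ∪ W₂) → 0, with maps v ↦ (v, −v) and (v₁, v₂) ↦ v₁ + v₂, is exact. -/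

import Mathlib

section Aux
variable {R M : Type*} [Ring R] [AddCommGroup M] [Module R M]
variable {A B C D : Submodule R M} (hCA : C ≤ A) (hCB : C ≤ B) (hAD : A ≤ D) (hBD : B ≤ D)

lemma aux_inj : Function.Injective
    (LinearMap.prod (Submodule.inclusion hCA) (-Submodule.inclusion hCB)) := by
  intro v v' h
  have h1 : Submodule.inclusion hCA v = Submodule.inclusion hCA v' := congrArg Prod.fst h
  exact Submodule.inclusion_injective hCA h1

lemma aux_exact : Function.Exact
      (LinearMap.prod (Submodule.inclusion hCA) (-Submodule.inclusion hCB))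
      ((Submodule.inclusion hAD).comp (LinearMap.fst R A B) +
        (Submodule.inclusion hBD).comp (LinearMap.snd R A B)) ↔ A ⊓ B ≤ C := by
  constructor
  · intro hex x hx
    obtain ⟨h1, h2⟩ := Submodule.mem_inf.mp hx
    have h0 : ((Submodule.inclusion hAD).comp (LinearMap.fst R A B) +
        (Submodule.inclusion hBD).comp (LinearMap.snd R A B)) (⟨x, h1⟩, ⟨-x, neg_mem h2⟩) = 0 := by
      apply Subtype.ext
      simp [Submodule.coe_inclusion]
    obtain ⟨v, hv⟩ := (hex _).mp h0
    have : (v : M) = x := congrArg Subtype.val (congrArg Prod.fst hv)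
    exact this ▸ v.2
  · intro hle p
    constructor
    · intro h0
      have hsum : (p.1 : M) + (p.2 : M) = 0 := congrArg Subtype.val h0
      have hmem : (p.1 : M) ∈ A ⊓ B := by
        refine Submodule.mem_inf.mpr ⟨p.1.2, ?_⟩
        have : (p.1 : M) = -(p.2 : M) := eq_neg_of_add_eq_zero_left hsum
        rw [this]; exact neg_mem p.2.2
      refine ⟨⟨(p.1 : M), hle hmem⟩, ?_⟩
      apply Prod.ext
      · apply Subtype.ext; rfl
      · apply Subtype.ext
        show -((p.1 : M)) = (p.2 : M)
        have : (p.1 : M) = -(p.2 : M) := eq_neg_of_add_eq_zero_left hsum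
        rw [this, neg_neg]
    · rintro ⟨v, rfl⟩
      apply Subtype.ext
      show ((v : M)) + (-(v : M)) = 0
      exact add_neg_cancel _

lemma aux_surj : Function.Surjective
      ((Submodule.inclusion hAD).comp (LinearMap.fst R A B) +
        (Submodule.inclusion hBD).comp (LinearMap.snd R A B)) ↔ D ≤ A ⊔ B := by
  constructor
  · intro hs z hz
    obtain ⟨⟨x, y⟩, hxy⟩ := hs ⟨z, hz⟩
    have : (x : M) + (y : M) = z := congrArg Subtype.val hxy
    exact Submodule.mem_sup.mpr ⟨x, x.2, y, y.2, this⟩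
  · rintro hle ⟨z, hz⟩
    obtain ⟨x, hx, y, hy, hxy⟩ := Submodule.mem_sup.mp (hle hz)
    exact ⟨(⟨x, hx⟩, ⟨y, hy⟩), Subtype.ext hxy⟩

end Aux


/-- Let `R` be a ring, `M` an `R`-module, `(W̃, ≤)` a finite poset, and `F` a map from lower
sets of `W̃` to `R`-submodules of `M`.  Then `F` is a morphism of complete lattices (i.e.
`F(⋂ᵢ Wᵢ) = ⋂ᵢ F(Wᵢ)` and `F(⋃ᵢ Wᵢ) = Σᵢ F(Wᵢ)` for every family of lower sets) if and only
if: `F` is inclusion-preserving, `F(∅) = 0`, `F(W̃) = M`, and for every pair of lower sets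
`W₁, W₂` the sequence `0 → F(W₁ ∩ W₂) → F(W₁) ⊕ F(W₂) → F(W₁ ∪ W₂) → 0`, with maps
`v ↦ (v, −v)` and `(v₁, v₂) ↦ v₁ + v₂`, is exact. -/
theorem stmt_4 {R M Wt : Type*} [Ring R] [AddCommGroup M] [Module R M] [PartialOrder Wt]
    [Finite Wt] (F : LowerSet Wt → Submodule R M) :
    ((∀ 𝒮 : Set (LowerSet Wt), F (sInf 𝒮) = ⨅ T ∈ 𝒮, F T) ∧
      (∀ 𝒮 : Set (LowerSet Wt), F (sSup 𝒮) = ⨆ T ∈ 𝒮, F T)) ↔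
    ∃ hmono : Monotone F, F ⊥ = ⊥ ∧ F ⊤ = ⊤ ∧
      ∀ W₁ W₂ : LowerSet Wt,
        Function.Injective
          (LinearMap.prod (Submodule.inclusion (hmono (inf_le_left (b := W₂))))
            (-Submodule.inclusion (hmono (inf_le_right (a := W₁)))) :
            ↥(F (W₁ ⊓ W₂)) →ₗ[R] ↥(F W₁) × ↥(F W₂)) ∧
        Function.Exact
          (LinearMap.prod (Submodule.inclusion (hmono (inf_le_left (b := W₂))))
            (-Submodule.inclusion (hmono (inf_le_right (a := W₁)))) :
            ↥(F (W₁ ⊓ W₂)) →ₗ[R] ↥(F W₁) × ↥(F W₂))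
          ((Submodule.inclusion (hmono (le_sup_left (b := W₂)))).comp
              (LinearMap.fst R ↥(F W₁) ↥(F W₂)) +
            (Submodule.inclusion (hmono (le_sup_right (a := W₁)))).comp
              (LinearMap.snd R ↥(F W₁) ↥(F W₂)) :
            ↥(F W₁) × ↥(F W₂) →ₗ[R] ↥(F (W₁ ⊔ W₂))) ∧
        Function.Surjective
          ((Submodule.inclusion (hmono (le_sup_left (b := W₂)))).comp
              (LinearMap.fst R ↥(F W₁) ↥(F W₂)) +
            (Submodule.inclusion (hmono (le_sup_right (a := W₁)))).comp
              (LinearMap.snd R ↥(F W₁) ↥(F W₂)) :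
            ↥(F W₁) × ↥(F W₂) →ₗ[R] ↥(F (W₁ ⊔ W₂))) := by
  constructor
  · rintro ⟨hinf, hsup⟩
    have hbinf : ∀ a b : LowerSet Wt, F (a ⊓ b) = F a ⊓ F b := by
      intro a b
      have h := hinf {a, b}
      rwa [sInf_pair, iInf_pair] at h
    have hbsup : ∀ a b : LowerSet Wt, F (a ⊔ b) = F a ⊔ F b := by
      intro a b
      have h := hsup {a, b}
      rwa [sSup_pair, iSup_pair] at h
    have hmono : Monotone F := by
      intro a b hab
      have := hbsup a b
      rw [sup_eq_right.mpr hab] at this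
      rw [this]; exact le_sup_left
    refine ⟨hmono, ?_, ?_, ?_⟩
    · simpa using hsup ∅
    · simpa using hinf ∅
    · intro W₁ W₂
      refine ⟨aux_inj _ _, ?_, ?_⟩
      · exact (aux_exact _ _ _ _).mpr (hbinf W₁ W₂).ge
      · exact (aux_surj _ _).mpr (hbsup W₁ W₂).le
  · rintro ⟨hmono, hbot, htop, hpair⟩
    have hbinf : ∀ a b : LowerSet Wt, F (a ⊓ b) = F a ⊓ F b := by
      intro a b
      obtain ⟨-, hex, -⟩ := hpair a b
      exact le_antisymm (le_inf (hmono inf_le_left) (hmono inf_le_right))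
        ((aux_exact _ _ _ _).mp hex)
    have hbsup : ∀ a b : LowerSet Wt, F (a ⊔ b) = F a ⊔ F b := by
      intro a b
      obtain ⟨-, -, hsurj⟩ := hpair a b
      exact le_antisymm ((aux_surj _ _).mp hsurj)
        (sup_le (hmono le_sup_left) (hmono le_sup_right))
    haveI : Finite (LowerSet Wt) :=
      Finite.of_injective (fun W : LowerSet Wt => (W : Set Wt)) SetLike.coe_injective
    constructor
    · intro 𝒮
      refine Set.Finite.induction_on 𝒮 𝒮.toFinite ?_ ?_
      · simpa using htop
      · intro a s _ _ ih
        rw [sInf_insert, hbinf, ih, iInf_insert]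
    · intro 𝒮
      refine Set.Finite.induction_on 𝒮 𝒮.toFinite ?_ ?_
      · simpa using hbot
      · intro a s _ _ ih
        rw [sSup_insert, hbsup, ih, iSup_insert]
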